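/- Let A be a Banach algebra and X a Banach A-bimodule. Suppose g : A → X satisfies ‖g(a²) − a·g(a) − g(a)·a‖ ≤ 2θ‖a‖^p for all a ∈ A, where θ ≥ 0 and p < 1, and suppose the limit δ(a) := lim_{n→∞} 2^{−n} g(2^n a) exists for all a ∈ A. Then δ(a²) = a·δ(a) + δ(a)·a for all a ∈ A. -/

import Mathlib

open Filter Topology MulOpposite

set_option linter.unusedSectionVars false
set_option linter.unusedVariables false

section

variable {A X : Type*}
  [NormedRing A] [NormedAlgebra ℂ A] [CompleteSpace A]
  [NormedAddCommGroup X] [NormedSpace ℂ X] [CompleteSpace X]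
  [Module A X] [Module Aᵐᵒᵖ X]
  [IsBoundedSMul A X] [IsBoundedSMul Aᵐᵒᵖ X]
  [SMulCommClass A Aᵐᵒᵖ X]
  [IsScalarTower ℂ A X] [IsScalarTower ℂ Aᵐᵒᵖ X]

lemma smul_comm_of_tower' {R B M : Type*} [CommSemiring R] [Semiring B] [Algebra R B]
    [AddCommMonoid M] [Module R M] [Module B M] [IsScalarTower R B M]
    (μ : R) (b : B) (x : M) : b • (μ • x) = μ • (b • x) := by
  calc b • (μ • x) = b • ((μ • (1 : B)) • x) := by rw [smul_assoc, one_smul]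
    _ = (b * (μ • (1 : B))) • x := (mul_smul _ _ _).symm
    _ = (μ • b) • x := by rw [mul_smul_comm, mul_one]
    _ = μ • (b • x) := smul_assoc _ _ _


/-- A Jordan derivation from `A` into the bimodule `X`: a `ℂ`-linear map `δ` with
`δ(a²) = a·δ(a) + δ(a)·a`. -/
def IsJordanDeriv (δ : A → X) : Prop :=
  (∀ x y : A, δ (x + y) = δ x + δ y) ∧ (∀ (μ : ℂ) (x : A), δ (μ • x) = μ • δ x) ∧
    ∀ a : A, δ (a ^ 2) = a • δ a + op a • δ a

/-- A generalized Jordan derivation: a `ℂ`-linear map `d` such that there is a Jordan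
derivation `δ` with `d(a²) = a·d(a) + δ(a)·a`. -/
def IsGenJordanDeriv (d : A → X) : Prop :=
  (∀ x y : A, d (x + y) = d x + d y) ∧ (∀ (μ : ℂ) (x : A), d (μ • x) = μ • d x) ∧
    ∃ δ : A → X, IsJordanDeriv δ ∧ ∀ a : A, d (a ^ 2) = a • d a + op a • δ a

theorem stmt (g δ : A → X) (θ p : ℝ) (hθ : 0 ≤ θ) (hp : p < 1)
    (hg : ∀ a : A, ‖g (a ^ 2) - a • g a - op a • g a‖ ≤ 2 * θ * ‖a‖ ^ p)
    (hδ : ∀ a : A, Tendsto (fun n : ℕ => ((2 : ℂ) ^ n)⁻¹ • g ((2 : ℂ) ^ n • a)) atTop (𝓝 (δ a))) :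
    ∀ a : A, δ (a ^ 2) = a • δ a + op a • δ a := by
  intro a
  have h2n : Tendsto (fun n : ℕ => 2 * n) atTop atTop :=
    tendsto_atTop_mono (f := id) (fun n => by simp only [id_eq]; omega) tendsto_id
  have hv : Tendsto (fun n : ℕ => ((2 : ℂ) ^ (2 * n))⁻¹ • g ((2 : ℂ) ^ (2 * n) • a ^ 2))
      atTop (𝓝 (δ (a ^ 2))) := (hδ (a ^ 2)).comp h2n
  have hu := hδ a
  have key : Tendsto (fun n : ℕ => ((2 : ℂ) ^ (2 * n))⁻¹ • g ((2 : ℂ) ^ (2 * n) • a ^ 2)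
      - a • (((2 : ℂ) ^ n)⁻¹ • g ((2 : ℂ) ^ n • a))
      - op a • (((2 : ℂ) ^ n)⁻¹ • g ((2 : ℂ) ^ n • a)))
      atTop (𝓝 (δ (a ^ 2) - a • δ a - op a • δ a)) :=
    (hv.sub (hu.const_smul a)).sub (hu.const_smul (op a))
  have hsc : ∀ n : ℕ, ((2 : ℂ) ^ (2 * n))⁻¹ * (2 : ℂ) ^ n = ((2 : ℂ) ^ n)⁻¹ := by
    intro n
    have h2 : (2 : ℂ) ^ n ≠ 0 := pow_ne_zero _ two_ne_zero
    rw [two_mul, pow_add]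
    field_simp
  have keyeq : ∀ n : ℕ, ((2 : ℂ) ^ (2 * n))⁻¹ • g ((2 : ℂ) ^ (2 * n) • a ^ 2)
      - a • (((2 : ℂ) ^ n)⁻¹ • g ((2 : ℂ) ^ n • a))
      - op a • (((2 : ℂ) ^ n)⁻¹ • g ((2 : ℂ) ^ n • a))
      = ((2 : ℂ) ^ (2 * n))⁻¹ • (g (((2 : ℂ) ^ n • a) ^ 2)
        - ((2 : ℂ) ^ n • a) • g ((2 : ℂ) ^ n • a)
        - op ((2 : ℂ) ^ n • a) • g ((2 : ℂ) ^ n • a)) := by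
    intro n
    rw [smul_sub, smul_sub]
    congr 1
    · congr 1
      · rw [smul_pow, ← pow_mul, mul_comm n 2]
      · rw [smul_assoc, smul_smul, hsc, ← smul_comm_of_tower']
    · rw [op_smul, smul_assoc, smul_smul, hsc, ← smul_comm_of_tower']
  have hnorm2 : ∀ n : ℕ, ‖(2 : ℂ) ^ n • a‖ = (2 : ℝ) ^ n * ‖a‖ := by
    intro n
    rw [norm_smul, norm_pow]
    norm_num
  have hb : ∀ n : ℕ, ‖((2 : ℂ) ^ (2 * n))⁻¹ • g ((2 : ℂ) ^ (2 * n) • a ^ 2)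
      - a • (((2 : ℂ) ^ n)⁻¹ • g ((2 : ℂ) ^ n • a))
      - op a • (((2 : ℂ) ^ n)⁻¹ • g ((2 : ℂ) ^ n • a))‖
      ≤ ((2 : ℝ) ^ (2 * n))⁻¹ * (2 * θ * ((2 : ℝ) ^ n * ‖a‖) ^ p) := by
    intro n
    rw [keyeq n, norm_smul]
    have h1 : ‖((2 : ℂ) ^ (2 * n))⁻¹‖ = ((2 : ℝ) ^ (2 * n))⁻¹ := by
      rw [norm_inv, norm_pow]; norm_num
    rw [h1]
    have := hg ((2 : ℂ) ^ n • a)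
    rw [hnorm2 n] at this
    exact mul_le_mul_of_nonneg_left this (by positivity)
  have hbound0 : Tendsto (fun n : ℕ => ((2 : ℝ) ^ (2 * n))⁻¹ * (2 * θ * ((2 : ℝ) ^ n * ‖a‖) ^ p))
      atTop (𝓝 0) := by
    rcases eq_or_lt_of_le (norm_nonneg a) with hc | hc
    · have heq : ∀ n : ℕ, ((2 : ℝ) ^ (2 * n))⁻¹ * (2 * θ * ((2 : ℝ) ^ n * ‖a‖) ^ p)
          = (2 * θ * (0 : ℝ) ^ p) * ((4 : ℝ)⁻¹) ^ n := by
        intro n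
        rw [← hc, mul_zero, pow_mul]
        norm_num
        rw [one_div, inv_pow]
        ac_rfl
      have h4 : Tendsto (fun n : ℕ => ((4 : ℝ)⁻¹) ^ n) atTop (𝓝 0) :=
        tendsto_pow_atTop_nhds_zero_of_lt_one (by norm_num) (by norm_num)
      simp only [heq]
      simpa using h4.const_mul (2 * θ * (0 : ℝ) ^ p)
    · have hr1 : (2 : ℝ) ^ (p - 2) < 1 :=
        Real.rpow_lt_one_of_one_lt_of_neg one_lt_two (by linarith)
      have hr0 : (0 : ℝ) ≤ (2 : ℝ) ^ (p - 2) := (Real.rpow_pos_of_pos two_pos _).le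
      have e1 : ∀ n : ℕ, ((2 : ℝ) ^ (2 * n))⁻¹ = (2 : ℝ) ^ (-(2 * (n : ℝ))) := by
        intro n
        rw [← Real.rpow_natCast (2 : ℝ) (2 * n), ← Real.rpow_neg (by norm_num)]
        congr 1
        push_cast
        ring
      have e2 : ∀ n : ℕ, ((2 : ℝ) ^ n : ℝ) ^ p = (2 : ℝ) ^ ((n : ℝ) * p) := by
        intro n
        rw [← Real.rpow_natCast (2 : ℝ) n, ← Real.rpow_mul (by norm_num)]
      have e3 : ∀ n : ℕ, ((2 : ℝ) ^ (p - 2)) ^ n = (2 : ℝ) ^ ((p - 2) * (n : ℝ)) := by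
        intro n
        rw [← Real.rpow_natCast ((2 : ℝ) ^ (p - 2)) n, ← Real.rpow_mul (by norm_num)]
      have heq : ∀ n : ℕ, ((2 : ℝ) ^ (2 * n))⁻¹ * (2 * θ * ((2 : ℝ) ^ n * ‖a‖) ^ p)
          = (2 * θ * ‖a‖ ^ p) * ((2 : ℝ) ^ (p - 2)) ^ n := by
        intro n
        rw [Real.mul_rpow (by positivity) hc.le, e1, e2, e3,
          show (p - 2) * (n : ℝ) = (n : ℝ) * p + (-(2 * (n : ℝ))) by ring,
          Real.rpow_add two_pos]
        ring
      have h4 : Tendsto (fun n : ℕ => ((2 : ℝ) ^ (p - 2)) ^ n) atTop (𝓝 0) :=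
        tendsto_pow_atTop_nhds_zero_of_lt_one hr0 hr1
      simp only [heq]
      simpa using h4.const_mul (2 * θ * ‖a‖ ^ p)
  have hzero : Tendsto (fun n : ℕ => ((2 : ℂ) ^ (2 * n))⁻¹ • g ((2 : ℂ) ^ (2 * n) • a ^ 2)
      - a • (((2 : ℂ) ^ n)⁻¹ • g ((2 : ℂ) ^ n • a))
      - op a • (((2 : ℂ) ^ n)⁻¹ • g ((2 : ℂ) ^ n • a))) atTop (𝓝 0) := by
    rw [tendsto_zero_iff_norm_tendsto_zero]
    exact squeeze_zero (fun n => norm_nonneg _) hb hbound0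
  have hfinal : δ (a ^ 2) - a • δ a - op a • δ a = 0 := tendsto_nhds_unique key hzero
  rw [sub_sub] at hfinal
  exact sub_eq_zero.mp hfinal
end
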